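/- First obstruction identity: in the abstract Hodge setting, with Γ_{[1]} = Σ t^i e_i harmonic, the bracket [Γ_{[1]}, Γ_{[1]}] lies in ker ∂̄, and ∂̄(G∂̄*[Γ_{[1]},Γ_{[1]}]) = (1 - P)[Γ_{[1]},Γ_{[1]}]; consequently, setting Γ_{[2]} = -½G∂̄*[Γ_{[1]},Γ_{[1]}], one gets ∂̄(Γ_{[1]} + Γ_{[2]}) + ½[Γ_{[1]}+Γ_{[2]}, Γ_{[1]}+Γ_{[2]}] = ½P[Γ_{[1]},Γ_{[1]}] + (terms of order ≥ 3 in t). -/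

import Mathlib

/-- Cauchy-product bracket on `g`-valued formal power series (coefficient families
indexed by monomials in the formal variables `t^i`). -/
noncomputable def cb {k : Type*} [Field k] {L : Type*} [AddCommGroup L] [Module k L]
    (b : L →ₗ[k] L →ₗ[k] L) {N : ℕ} (f g : (Fin N →₀ ℕ) → L) : (Fin N →₀ ℕ) → L :=
  fun m => ∑ p ∈ Finset.HasAntidiagonal.antidiagonal m, b (f p.1) (g p.2)

/-- first obstruction identity. In the abstract Hodge setting, with
`Γ_[1] = Σ t^i e_i` harmonic: `[Γ_[1],Γ_[1]] ∈ ker ∂̄`;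
`∂̄(G∂̄*[Γ_[1],Γ_[1]]) = (1-P)[Γ_[1],Γ_[1]]`; and consequently, setting
`Γ_[2] = -½G∂̄*[Γ_[1],Γ_[1]]`, one has
`∂̄(Γ_[1]+Γ_[2]) + ½[Γ_[1]+Γ_[2], Γ_[1]+Γ_[2]] = ½P[Γ_[1],Γ_[1]] + O(t³)`. -/
theorem stmt16
    (k : Type*) [Field k] [CharZero k]
    (L : Type*) [AddCommGroup L] [Module k L]
    -- dg Lie algebra structure with parity (the e_i are odd)
    (Gr : ZMod 2 → Submodule k L)
    (b : L →ₗ[k] L →ₗ[k] L)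
    (hb_gr : ∀ (i j : ZMod 2) (x y : L), x ∈ Gr i → y ∈ Gr j → b x y ∈ Gr (i + j))
    (hanti : ∀ (i j : ZMod 2) (x y : L), x ∈ Gr i → y ∈ Gr j →
      b x y = -(((-1 : k) ^ ((i * j).val)) • b y x))
    (hjac : ∀ (i j : ZMod 2) (x y z : L), x ∈ Gr i → y ∈ Gr j →
      b x (b y z) = b (b x y) z + ((-1 : k) ^ ((i * j).val)) • b y (b x z))
    -- abstract Hodge package: ∂̄, ∂̄*, G, P with the usual identities
    (db dbs G P : Module.End k L)
    (hdb2 : db * db = 0) (hdbs2 : dbs * dbs = 0)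
    (hleib : ∀ (i : ZMod 2) (x y : L), x ∈ Gr i →
      db (b x y) = b (db x) y + ((-1 : k) ^ i.val) • b x (db y))
    (hHodge : (1 : Module.End k L) = P + (db * dbs + dbs * db) * G)
    (hGdb : G * db = db * G) (hGdbs : G * dbs = dbs * G)
    (hPdb : P * db = 0) (hdbP : db * P = 0)
    (hPdbs : P * dbs = 0) (hdbsP : dbs * P = 0)
    -- harmonic elements e_i, formal variables t^i; Γ_[1] = Σ t^i e_i and
    -- Γ_[2] = -½ G∂̄*[Γ_[1],Γ_[1]] as coefficient families
    (N : ℕ) (e : Fin N → L)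
    (he_db : ∀ i, db (e i) = 0) (he_dbs : ∀ i, dbs (e i) = 0)
    (he_P : ∀ i, P (e i) = e i) (he_odd : ∀ i, e i ∈ Gr 1)
    (Γ₁ Γ₂ : (Fin N →₀ ℕ) → L)
    (hΓ₁ : Γ₁ = fun m => ∑ i, if m = Finsupp.single i 1 then e i else 0)
    (hΓ₂ : Γ₂ = fun m => -((2⁻¹ : k) • G (dbs (cb b Γ₁ Γ₁ m)))) :
    -- (1) [Γ_[1],Γ_[1]] is ∂̄-closed (since ∂̄ is a derivation of the bracket)
    (∀ m, db (cb b Γ₁ Γ₁ m) = 0) ∧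
    -- (2) ∂̄(G∂̄*[Γ_[1],Γ_[1]]) = (1 - P)[Γ_[1],Γ_[1]]
    (∀ m, db (G (dbs (cb b Γ₁ Γ₁ m))) = cb b Γ₁ Γ₁ m - P (cb b Γ₁ Γ₁ m)) ∧
    -- (3) ∂̄(Γ_[1]+Γ_[2]) + ½[Γ_[1]+Γ_[2],Γ_[1]+Γ_[2]] = ½P[Γ_[1],Γ_[1]] + (order ≥ 3)
    (∃ ρ : (Fin N →₀ ℕ) → L,
      (∀ m : Fin N →₀ ℕ, (m.sum fun _ e => e) ≤ 2 → ρ m = 0) ∧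
      (∀ m, db (Γ₁ m + Γ₂ m)
          + (2⁻¹ : k) • cb b (fun m' => Γ₁ m' + Γ₂ m') (fun m' => Γ₁ m' + Γ₂ m') m
        = (2⁻¹ : k) • P (cb b Γ₁ Γ₁ m) + ρ m)) := by

  classical
  -- degree facts
  have hdeg_add : ∀ p q : Fin N →₀ ℕ,
      ((p + q).sum fun _ e => e) = (p.sum fun _ e => e) + (q.sum fun _ e => e) := by
    intro p q
    exact Finsupp.sum_add_index' (fun _ => rfl) (fun _ _ _ => rfl)
  have hΓ₁deg : ∀ m : Fin N →₀ ℕ, (m.sum fun _ e => e) ≠ 1 → Γ₁ m = 0 := by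
    intro m hm
    rw [hΓ₁]
    apply Finset.sum_eq_zero
    intro i _
    rw [if_neg]
    intro h
    apply hm
    rw [h]
    simp [Finsupp.sum_single_index]
  -- Γ₁ values are in Gr 1, db-closed, dbs-closed, P-fixed
  have hΓ₁gr : ∀ m, Γ₁ m ∈ Gr 1 := by
    intro m
    rw [hΓ₁]
    apply Submodule.sum_mem
    intro i _
    split
    · exact he_odd i
    · exact Submodule.zero_mem _
  have hΓ₁db : ∀ m, db (Γ₁ m) = 0 := by
    intro m
    rw [hΓ₁, map_sum]
    apply Finset.sum_eq_zero
    intro i _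
    split
    · exact he_db i
    · exact map_zero _
  -- part (1)
  have h1 : ∀ m, db (cb b Γ₁ Γ₁ m) = 0 := by
    intro m
    unfold cb
    rw [map_sum]
    apply Finset.sum_eq_zero
    intro p _
    rw [hleib 1 _ _ (hΓ₁gr p.1), hΓ₁db, hΓ₁db, map_zero, LinearMap.zero_apply,
      map_zero, smul_zero, add_zero]
  -- part (2)
  have h2 : ∀ m, db (G (dbs (cb b Γ₁ Γ₁ m))) = cb b Γ₁ Γ₁ m - P (cb b Γ₁ Γ₁ m) := by
    intro m
    set w := cb b Γ₁ Γ₁ m with hw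
    have hdbGw : db (G w) = 0 := by
      have h : (db * G) w = (G * db) w := by rw [hGdb]
      simp only [Module.End.mul_apply] at h
      rw [h, h1 m, map_zero]
    have hGdbsw : G (dbs w) = dbs (G w) := by
      have h : (G * dbs) w = (dbs * G) w := by rw [hGdbs]
      simpa only [Module.End.mul_apply] using h
    have hH : (1 : Module.End k L) w = (P + (db * dbs + dbs * db) * G) w := by rw [← hHodge]
    simp only [Module.End.one_apply, LinearMap.add_apply, Module.End.mul_apply] at hH
    rw [hdbGw, map_zero, add_zero] at hH
    rw [hGdbsw]
    exact eq_sub_of_add_eq (by rw [add_comm]; exact hH.symm)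
  refine ⟨h1, h2, ?_⟩
  -- degree of Γ₂
  have hΓ₂deg : ∀ m : Fin N →₀ ℕ, (m.sum fun _ e => e) ≠ 2 → Γ₂ m = 0 := by
    intro m hm
    rw [hΓ₂]
    have : cb b Γ₁ Γ₁ m = 0 := by
      unfold cb
      apply Finset.sum_eq_zero
      intro p hp
      by_cases h1' : (p.1.sum fun _ e => e) = 1
      · by_cases h2' : (p.2.sum fun _ e => e) = 1
        · exfalso
          apply hm
          rw [← (Finset.HasAntidiagonal.mem_antidiagonal.mp hp), hdeg_add, h1', h2']
        · rw [hΓ₁deg p.2 h2', map_zero]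
      · rw [hΓ₁deg p.1 h1', map_zero, LinearMap.zero_apply]
    simp only [this, map_zero, smul_zero, neg_zero]
  refine ⟨fun m => (2⁻¹ : k) • (cb b Γ₁ Γ₂ m + cb b Γ₂ Γ₁ m + cb b Γ₂ Γ₂ m), ?_, ?_⟩
  · intro m hm
    have key : ∀ (f g : (Fin N →₀ ℕ) → L) (df dg : ℕ),
        (∀ m', (m'.sum fun _ e => e) ≠ df → f m' = 0) →
        (∀ m', (m'.sum fun _ e => e) ≠ dg → g m' = 0) →
        2 < df + dg → cb b f g m = 0 := by
      intro f g df dg hf hg hlt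
      unfold cb
      apply Finset.sum_eq_zero
      intro p hp
      by_cases h1' : (p.1.sum fun _ e => e) = df
      · by_cases h2' : (p.2.sum fun _ e => e) = dg
        · exfalso
          have : (m.sum fun _ e => e) = df + dg := by
            rw [← (Finset.HasAntidiagonal.mem_antidiagonal.mp hp), hdeg_add, h1', h2']
          omega
        · rw [hg p.2 h2', map_zero]
      · rw [hf p.1 h1', map_zero, LinearMap.zero_apply]
    simp only [key Γ₁ Γ₂ 1 2 hΓ₁deg hΓ₂deg (by omega),
      key Γ₂ Γ₁ 2 1 hΓ₂deg hΓ₁deg (by omega),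
      key Γ₂ Γ₂ 2 2 hΓ₂deg hΓ₂deg (by omega), add_zero, smul_zero]
  · intro m
    have hcb_expand : cb b (fun m' => Γ₁ m' + Γ₂ m') (fun m' => Γ₁ m' + Γ₂ m') m
        = cb b Γ₁ Γ₁ m + (cb b Γ₁ Γ₂ m + cb b Γ₂ Γ₁ m + cb b Γ₂ Γ₂ m) := by
      unfold cb
      rw [← Finset.sum_add_distrib, ← Finset.sum_add_distrib, ← Finset.sum_add_distrib]
      apply Finset.sum_congr rfl
      intro p _
      simp [map_add, LinearMap.add_apply]
      abel
    have hdbΓ₂ : db (Γ₂ m) = -((2⁻¹ : k) • (cb b Γ₁ Γ₁ m - P (cb b Γ₁ Γ₁ m))) := by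
      rw [hΓ₂]
      simp only [map_neg, map_smul, h2 m]
    rw [map_add, hΓ₁db, hdbΓ₂, hcb_expand, zero_add, smul_add, smul_sub]
    abel
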